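/- Under the structured setup, suppose 𝔛 is first-countable and let x ∈ 𝔛∞ be such that π(x) is eventually periodic under φ (there exist m ≥ 0 and n ≥ 1 with φ^{m+n}(π(x)) = φ^m(π(x))). Then the omega limit set ω_Φ(x) is contained in S_Φ ∩ 𝔛∞. -/

import Mathlib

open Set Filter Topology

/-- The set of points through which a (bi-infinite) solution of `Φ` passes. -/
def SolSet {𝔛 : Type*} (Φ : 𝔛 → 𝔛) : Set 𝔛 :=
  {x | ∃ χ : ℤ → 𝔛, χ 0 = x ∧ ∀ t : ℤ, χ (t + 1) = Φ (χ t)}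

theorem stmt14 {𝔛 𝒵 : Type*} [TopologicalSpace 𝔛] [TopologicalSpace 𝒵]
    [T2Space 𝔛] [T2Space 𝒵]
    (π : 𝔛 → 𝒵) (hπ : Continuous π)
    (φ : 𝒵 → 𝒵) (hφc : Continuous φ) (hφb : Function.Bijective φ)
    (Φ : 𝔛 → 𝔛) (hΦc : Continuous Φ) (hbundle : π ∘ Φ = φ ∘ π)
    -- structured setup: a continuous left-inverse Θ of Φ which is a bundle map
    -- over φ⁻¹ (phrased as φ ∘ π ∘ Θ = π), and a forward-invariant set 𝔛₀ with
    -- closed non-empty fibers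
    (Θ : 𝔛 → 𝔛) (hΘc : Continuous Θ) (hΘΦ : Θ ∘ Φ = id)
    (hΘbundle : φ ∘ (π ∘ Θ) = π)
    (X0 : Set 𝔛) (hX0inv : Φ '' X0 ⊆ X0)
    (hX0closed : ∀ z : 𝒵, IsClosed (X0 ∩ π ⁻¹' {z}))
    (hX0ne : ∀ z : 𝒵, (X0 ∩ π ⁻¹' {z}).Nonempty)
    -- 𝔛∞ := ⋂_{n ≥ 0} (Θⁿ)⁻¹(𝔛₀)
    (Xinf : Set 𝔛) (hXinf : Xinf = ⋂ n : ℕ, Θ^[n] ⁻¹' X0)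
    -- 𝔛 is first-countable
    [FirstCountableTopology 𝔛]
    -- x ∈ 𝔛∞ with π(x) eventually periodic under φ
    (x : 𝔛) (hx : x ∈ Xinf)
    (hper : ∃ m n : ℕ, 1 ≤ n ∧ φ^[m + n] (π x) = φ^[m] (π x)) :
    -- ω_Φ(x) ⊆ S_Φ ∩ 𝔛∞
    (⋂ n ∈ {n : ℕ | 1 ≤ n}, closure (⋃ m ∈ {m : ℕ | n ≤ m}, {Φ^[m] x})) ⊆
      SolSet Φ ∩ Xinf := by
  subst hXinf
  intro y hy
  set e := Equiv.ofBijective φ hφb with he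
  have hΘΦ' : ∀ w, Θ (Φ w) = w := fun w => congrFun hΘΦ w
  have hcancel : ∀ n w, Θ^[n] (Φ^[n] w) = w := by
    intro n
    induction n with
    | zero => intro w; simp
    | succ n ih =>
      intro w
      rw [Function.iterate_succ_apply' Φ, Function.iterate_succ_apply Θ, hΘΦ', ih]
  have hcancel2 : ∀ n d w, Θ^[n] (Φ^[n + d] w) = Φ^[d] w := by
    intro n d w
    rw [Function.iterate_add_apply, hcancel]
  -- sequences converging to y
  have hseq : ∀ n : ℕ, ∃ m : ℕ → ℕ, (∀ k, n ≤ m k) ∧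
      Tendsto (fun k => Φ^[m k] x) atTop (𝓝 y) := by
    intro n
    have h1 : y ∈ closure (⋃ m ∈ {m : ℕ | max 1 n ≤ m}, {Φ^[m] x}) :=
      mem_iInter₂.mp hy (max 1 n) (le_max_left 1 n)
    obtain ⟨u, hu, hul⟩ := mem_closure_iff_seq_limit.mp h1
    have hu' : ∀ k, ∃ j, max 1 n ≤ j ∧ u k = Φ^[j] x := by
      intro k
      have := hu k
      simp only [mem_iUnion, mem_singleton_iff, mem_setOf_eq, exists_prop] at this
      exact this
    choose m hm hum using hu'
    refine ⟨m, fun k => le_trans (le_max_right 1 n) (hm k), ?_⟩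
    have : (fun k => Φ^[m k] x) = u := funext fun k => (hum k).symm
    rw [this]; exact hul
  -- key: y is infinitely backward-extendable via Θ
  have hkey : ∀ n : ℕ, Φ (Θ^[n + 1] y) = Θ^[n] y := by
    intro n
    obtain ⟨m, hm, hl⟩ := hseq (n + 1)
    have h1 : Tendsto (fun k => Θ^[n] (Φ^[m k] x)) atTop (𝓝 (Θ^[n] y)) :=
      ((hΘc.iterate n).tendsto y).comp hl
    have h2 : Tendsto (fun k => Φ (Θ^[n + 1] (Φ^[m k] x))) atTop
        (𝓝 (Φ (Θ^[n + 1] y))) :=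
      ((hΦc.comp (hΘc.iterate (n + 1))).tendsto y).comp hl
    have heq : (fun k => Φ (Θ^[n + 1] (Φ^[m k] x))) =
        fun k => Θ^[n] (Φ^[m k] x) := by
      funext k
      obtain ⟨d, hd⟩ : ∃ d, m k = n + 1 + d := ⟨m k - (n + 1), by have := hm k; omega⟩
      rw [hd, hcancel2 (n + 1) d]
      have h5 : n + 1 + d = n + (d + 1) := by omega
      rw [h5, hcancel2 n (d + 1), Function.iterate_succ_apply' Φ d x]
    exact tendsto_nhds_unique (heq ▸ h2) h1
  -- y ∈ SolSet Φ
  have hsol : y ∈ SolSet Φ := by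
    refine ⟨fun t => if 0 ≤ t then Φ^[t.toNat] y else Θ^[(-t).toNat] y, by simp, ?_⟩
    intro t
    show (if 0 ≤ t + 1 then Φ^[(t + 1).toNat] y else Θ^[(-(t + 1)).toNat] y) =
      Φ (if 0 ≤ t then Φ^[t.toNat] y else Θ^[(-t).toNat] y)
    by_cases h0 : 0 ≤ t
    · have h1 : (0 : ℤ) ≤ t + 1 := by omega
      rw [if_pos h0, if_pos h1]
      have : (t + 1).toNat = t.toNat + 1 := by omega
      rw [this, Function.iterate_succ_apply']
    · rw [if_neg h0]
      have hnt : (-t).toNat = (-(t + 1)).toNat + 1 := by omega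
      rw [hnt, hkey]
      by_cases h1 : 0 ≤ t + 1
      · rw [if_pos h1]
        have h2 : (t + 1).toNat = 0 := by omega
        have h3 : (-(t + 1)).toNat = 0 := by omega
        rw [h2, h3]
        simp
      · rw [if_neg h1]
  -- π ∘ Θ = e.symm ∘ π
  have hπΘ1 : ∀ w, π (Θ w) = e.symm (π w) := by
    intro w
    have h := congrFun hΘbundle w
    simp only [Function.comp_apply] at h
    calc π (Θ w) = e.symm (e (π (Θ w))) := (e.symm_apply_apply _).symm
      _ = e.symm (π w) := by
          rw [show e (π (Θ w)) = φ (π (Θ w)) from rfl, h]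
  have hπΘn : ∀ n w, π (Θ^[n] w) = (⇑e.symm)^[n] (π w) := by
    intro n
    induction n with
    | zero => intro w; simp
    | succ n ih =>
      intro w
      rw [Function.iterate_succ_apply Θ, Function.iterate_succ_apply e.symm, ih, hπΘ1]
  have hπΦn : ∀ n w, π (Φ^[n] w) = φ^[n] (π w) := by
    intro n
    induction n with
    | zero => intro w; simp
    | succ n ih =>
      intro w
      rw [Function.iterate_succ_apply Φ, Function.iterate_succ_apply φ, ih,
        show π (Φ w) = φ (π w) from congrFun hbundle w]
  -- forward invariance of Xinf
  have hΦX : ∀ w, w ∈ (⋂ n : ℕ, Θ^[n] ⁻¹' X0) → Φ w ∈ ⋂ n : ℕ, Θ^[n] ⁻¹' X0 := by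
    intro w hw
    simp only [mem_iInter, mem_preimage] at hw ⊢
    intro n
    cases n with
    | zero => simpa using hX0inv ⟨w, by simpa using hw 0, rfl⟩
    | succ n => rw [Function.iterate_succ_apply Θ, hΘΦ']; exact hw n
  have hxm : ∀ j : ℕ, Φ^[j] x ∈ ⋂ n : ℕ, Θ^[n] ⁻¹' X0 := by
    intro j
    induction j with
    | zero => simpa using hx
    | succ j ih => rw [Function.iterate_succ_apply' Φ]; exact hΦX _ ih
  -- eventual periodicity: π (Φ^[m] x) lies in a finite set
  obtain ⟨m₀, n₀, hn₀, hp⟩ := hper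
  have hshift : ∀ m, m₀ + n₀ ≤ m → φ^[m] (π x) = φ^[m - n₀] (π x) := by
    intro m hm'
    obtain ⟨s, rfl⟩ : ∃ s, m = s + (m₀ + n₀) := ⟨m - (m₀ + n₀), by omega⟩
    rw [Function.iterate_add_apply, hp, ← Function.iterate_add_apply]
    congr 1
    omega
  have hfin : ∀ m, ∃ j, j < m₀ + n₀ ∧ φ^[m] (π x) = φ^[j] (π x) := by
    intro m
    induction m using Nat.strong_induction_on with
    | _ m ih =>
      by_cases h : m < m₀ + n₀
      · exact ⟨m, h, rfl⟩
      · obtain ⟨j, hj, hje⟩ := ih (m - n₀) (by omega)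
        exact ⟨j, hj, by rw [hshift m (by omega), hje]⟩
  set F : Set 𝒵 := (fun j => φ^[j] (π x)) '' (Set.Iio (m₀ + n₀)) with hF
  have hFfin : F.Finite := (Set.finite_Iio _).image _
  -- one sequence suffices for the Xinf part
  obtain ⟨m, hm, hl⟩ := hseq 0
  have hπu : ∀ k, π (Φ^[m k] x) ∈ F := by
    intro k
    obtain ⟨j, hj, hje⟩ := hfin (m k)
    exact ⟨j, hj, show φ^[j] (π x) = π (Φ^[m k] x) by rw [← hje, hπΦn]⟩
  have hπl : Tendsto (fun k => π (Φ^[m k] x)) atTop (𝓝 (π y)) :=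
    (hπ.tendsto y).comp hl
  have hπyF : π y ∈ F :=
    hFfin.isClosed.mem_of_tendsto hπl (Eventually.of_forall hπu)
  have hGopen : (F \ {π y})ᶜ ∈ 𝓝 (π y) :=
    ((hFfin.diff (t := {π y})).isClosed).isOpen_compl.mem_nhds (by simp)
  have hev : ∀ᶠ k in atTop, π (Φ^[m k] x) = π y := by
    have h1 : ∀ᶠ k in atTop, π (Φ^[m k] x) ∈ (F \ {π y})ᶜ :=
      hπl.eventually (eventually_of_mem hGopen fun z hz => hz)
    filter_upwards [h1] with k hk
    by_contra hne
    exact hk ⟨hπu k, hne⟩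
  -- Xinf has closed fibers
  have hXfib : IsClosed ((⋂ n : ℕ, Θ^[n] ⁻¹' X0) ∩ π ⁻¹' {π y}) := by
    have hset : (⋂ n : ℕ, Θ^[n] ⁻¹' X0) ∩ π ⁻¹' {π y} =
        ⋂ n : ℕ, (Θ^[n] ⁻¹' (X0 ∩ π ⁻¹' {(⇑e.symm)^[n] (π y)}) ∩ π ⁻¹' {π y}) := by
      ext w
      simp only [mem_inter_iff, mem_iInter, mem_preimage, mem_singleton_iff]
      constructor
      · rintro ⟨h1, h2⟩ n
        exact ⟨⟨h1 n, by rw [hπΘn, h2]⟩, h2⟩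
      · intro h
        exact ⟨fun n => (h n).1.1, (h 0).2⟩
    rw [hset]
    exact isClosed_iInter fun n =>
      ((hX0closed _).preimage (hΘc.iterate n)).inter (isClosed_singleton.preimage hπ)
  have hyX : y ∈ (⋂ n : ℕ, Θ^[n] ⁻¹' X0) ∩ π ⁻¹' {π y} := by
    refine hXfib.mem_of_tendsto hl ?_
    filter_upwards [hev] with k hk
    exact ⟨hxm (m k), hk⟩
  exact ⟨hsol, hyX.1⟩
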